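/- Correctness of the arity-generic self-application example: for every natural number n, λx_1…x_n.((x_1 x_2 ⋯ x_n) (x_1 x_2 ⋯ x_n)) =βη (S_n I I), generalizing Church's term D = λx.(x x) = (S I I). -/

import Mathlib

namespace LC

/-- Untyped λ-terms, de Bruijn indices. -/
inductive Tm : Type
  | var : ℕ → Tm
  | app : Tm → Tm → Tm
  | lam : Tm → Tm
  deriving DecidableEq

namespace Tm

/-- Shift the free variables ≥ c up by one. -/
def lift (c : ℕ) : Tm → Tm
  | var n => if n < c then var n else var (n + 1)
  | app a b => app (lift c a) (lift c b)
  | lam a => lam (lift (c + 1) a)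

/-- Substitute `s` for the free variable `k`. -/
def subst (k : ℕ) (s : Tm) : Tm → Tm
  | var n => if n = k then s else if k < n then var (n - 1) else var n
  | app a b => app (subst k s a) (subst k s b)
  | lam a => lam (subst (k + 1) (lift 0 s) a)

/-- One-step βη-reduction (with congruence closure). -/
inductive Step : Tm → Tm → Prop
  | beta (a b : Tm) : Step (app (lam a) b) (subst 0 b a)
  | eta (a : Tm) : Step (lam (app (lift 0 a) (var 0))) a
  | appL {a a' : Tm} (b : Tm) : Step a a' → Step (app a b) (app a' b)
  | appR (a : Tm) {b b' : Tm} : Step b b' → Step (app a b) (app a b')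
  | lamCongr {a a' : Tm} : Step a a' → Step (lam a) (lam a')

/-- βη-equivalence: the equivalence relation generated by βη-reduction. -/
def BetaEta : Tm → Tm → Prop := Relation.EqvGen Step

/-- Multi-step βη-reduction: reflexive-transitive closure of βη-reduction. -/
def Reduces : Tm → Tm → Prop := Relation.ReflTransGen Step

/-- I = λx.x -/
def I : Tm := lam (var 0)
/-- K = λxy.x -/
def K : Tm := lam (lam (var 1))
/-- B = λxyz.(x (y z)) -/
def B : Tm := lam (lam (lam (app (var 2) (app (var 1) (var 0)))))
/-- C = λxyz.(x z y) -/
def C : Tm := lam (lam (lam (app (app (var 2) (var 0)) (var 1))))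
/-- S = λxyz.(x z (y z)) -/
def S : Tm := lam (lam (lam (app (app (var 2) (var 0)) (app (var 1) (var 0)))))

/-- body of the n-th Church numeral: s (s ⋯ (s z)⋯), n times. -/
def churchBody : ℕ → Tm
  | 0 => var 0
  | n + 1 => app (var 1) (churchBody n)

/-- The n-th Church numeral c_n = λsz.(s (s ⋯ (s z)⋯)). -/
def church (n : ℕ) : Tm := lam (lam (churchBody n))

/-- n nested λ-abstractions. -/
def lamN : ℕ → Tm → Tm
  | 0, t => t
  | n + 1, t => lam (lamN n t)

/-- Shift all free variables up by n. -/
def liftN (n : ℕ) (t : Tm) : Tm := (lift 0)^[n] t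

/-- t (var (a+k-1)) ⋯ (var (a+1)) (var a) : left-associated application of t
to k variables with descending indices. -/
def appVars (t : Tm) (a k : ℕ) : Tm :=
  ((List.range k).reverse).foldl (fun s i => app s (var (a + i))) t

/-- t (var a) (var (a+1)) ⋯ (var (a+k-1)) : left-associated application of t
to k variables with ascending indices. -/
def appVarsAsc (t : Tm) (a k : ℕ) : Tm :=
  (List.range k).foldl (fun s i => app s (var (a + i))) t

/-- Left-associated application of t to a list of terms. -/
def appList (t : Tm) (l : List Tm) : Tm := l.foldl app t

/-- K_n = λp x_1…x_n. p -/
def Kn (n : ℕ) : Tm := lamN (n + 1) (var n)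
/-- S_n = λpq x_1…x_n.(p x_1⋯x_n (q x_1⋯x_n)) -/
def Sn (n : ℕ) : Tm :=
  lamN (n + 2) (app (appVars (var (n + 1)) 0 n) (appVars (var n) 0 n))
/-- B_n = λpq x_1…x_n.(p (q x_1⋯x_n)) -/
def Bn (n : ℕ) : Tm := lamN (n + 2) (app (var (n + 1)) (appVars (var n) 0 n))
/-- C_n = λpq x_1…x_n.(p x_1⋯x_n q) -/
def Cn (n : ℕ) : Tm := lamN (n + 2) (app (appVars (var (n + 1)) 0 n) (var n))


-- aux lemmas
lemma lift_I (c : ℕ) : lift c I = I := by simp [I, lift]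

lemma subst_I (k : ℕ) (s : Tm) : subst k s I = I := by simp [I, subst]

lemma appVars_succ (t : Tm) (a k : ℕ) :
    appVars t a (k + 1) = appVars (app t (var (a + k))) a k := by
  simp [appVars, List.range_succ]

lemma subst_appVars (k m : ℕ) (s t : Tm) (h : m ≤ k) :
    subst k s (appVars t 0 m) = appVars (subst k s t) 0 m := by
  induction m generalizing t with
  | zero => simp [appVars]
  | succ m ih =>
      rw [appVars_succ, appVars_succ, ih _ (le_of_lt h)]
      have hm : ¬ (m = k) := by omega
      have hm2 : ¬ (k < m) := by omega
      simp [subst, hm, hm2]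

lemma subst_lamN_I (k m : ℕ) (t : Tm) :
    subst k I (lamN m t) = lamN m (subst (k + m) I t) := by
  induction m generalizing k with
  | zero => simp [lamN]
  | succ m ih =>
      simp only [lamN, subst, lift_I, ih]
      have : k + 1 + m = k + (m + 1) := by omega
      rw [this]

lemma step_appVars {t t' : Tm} (a k : ℕ) (h : Step t t') :
    Step (appVars t a k) (appVars t' a k) := by
  induction k generalizing t t' with
  | zero => simpa [appVars] using h
  | succ k ih => rw [appVars_succ, appVars_succ]; exact ih (Step.appL _ h)

lemma reduces_lamN {t t' : Tm} (n : ℕ) (h : Reduces t t') :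
    Reduces (lamN n t) (lamN n t') := by
  induction n with
  | zero => simpa [lamN]
  | succ n ih =>
      exact Relation.ReflTransGen.lift lam (fun _ _ => Step.lamCongr) _ _ ih

lemma reduces_betaEta {a b : Tm} (h : Reduces a b) : BetaEta a b := by
  induction h with
  | refl => exact Relation.EqvGen.refl _
  | tail _ h2 ih => exact Relation.EqvGen.trans _ _ _ ih (Relation.EqvGen.rel _ _ h2)


/-- λx_1…x_n.((x_1 x_2 ⋯ x_n) (x_1 x_2 ⋯ x_n)) =βη (S_n I I).
Under the n binders, the left-associated application x_1 x_2 ⋯ x_n is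
`appVars (var (n-1)) 0 (n-1)` (which requires n ≥ 1 to be meaningful). -/
theorem Dn_encoding (n : ℕ) (hn : 1 ≤ n) :
    BetaEta
      (lamN n (app (appVars (var (n - 1)) 0 (n - 1))
                   (appVars (var (n - 1)) 0 (n - 1))))
      (app (app (Sn n) I) I) := by
  obtain ⟨m, rfl⟩ : ∃ m, n = m + 1 := ⟨n - 1, (Nat.succ_pred_eq_of_pos hn).symm⟩
  set n := m + 1 with hn'
  apply Relation.EqvGen.symm
  apply reduces_betaEta
  -- step 1: β-reduce the first argument
  have e1 : subst 0 I (lamN (n + 1)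
      (app (appVars (var (n + 1)) 0 n) (appVars (var n) 0 n)))
      = lamN (n + 1) (app (appVars I 0 n) (appVars (var n) 0 n)) := by
    rw [subst_lamN_I, Nat.zero_add]
    congr 1
    have h1 : subst (n + 1) I (appVars (var (n + 1)) 0 n)
        = appVars I 0 n := by
      rw [subst_appVars _ _ _ _ (by omega)]
      simp [subst]
    have h2 : subst (n + 1) I (appVars (var n) 0 n)
        = appVars (var n) 0 n := by
      rw [subst_appVars _ _ _ _ (by omega)]
      simp [subst]
    simp [subst, h1, h2]
  have s1 : Step (app (app (Sn n) I) I)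
      (app (lam (lamN n (app (appVars I 0 n) (appVars (var n) 0 n)))) I) := by
    apply Step.appL
    have := Step.beta (lamN (n + 1)
      (app (appVars (var (n + 1)) 0 n) (appVars (var n) 0 n))) I
    rw [e1] at this
    exact this
  -- step 2: β-reduce the second argument
  have e2 : subst 0 I (lamN n (app (appVars I 0 n) (appVars (var n) 0 n)))
      = lamN n (app (appVars I 0 n) (appVars I 0 n)) := by
    rw [subst_lamN_I, Nat.zero_add]
    congr 1
    have h1 : subst n I (appVars I 0 n) = appVars I 0 n := by
      rw [subst_appVars _ _ _ _ (by omega), subst_I]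
    have h2 : subst n I (appVars (var n) 0 n) = appVars I 0 n := by
      rw [subst_appVars _ _ _ _ (by omega)]
      simp [subst]
    simp [subst, h1, h2]
  have s2 : Step (app (lam (lamN n (app (appVars I 0 n) (appVars (var n) 0 n)))) I)
      (lamN n (app (appVars I 0 n) (appVars I 0 n))) := by
    have := Step.beta (lamN n (app (appVars I 0 n) (appVars (var n) 0 n))) I
    rw [e2] at this
    exact this
  -- step 3: reduce I x1 ... xn to x1 ... xn on both sides
  have hIv : Step (app I (var m)) (var m) := by
    have := Step.beta (var 0) (var m)
    simpa [subst, I] using this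
  have hred : Step (appVars I 0 n) (appVars (var m) 0 m) := by
    rw [hn', appVars_succ]
    simpa using step_appVars 0 m hIv
  have s3 : Reduces (lamN n (app (appVars I 0 n) (appVars I 0 n)))
      (lamN n (app (appVars (var m) 0 m) (appVars (var m) 0 m))) := by
    apply reduces_lamN
    exact Relation.ReflTransGen.head (Step.appL _ hred)
      (Relation.ReflTransGen.single (Step.appR _ hred))
  have : (n : ℕ) - 1 = m := by omega
  rw [this]
  exact Relation.ReflTransGen.head s1 (Relation.ReflTransGen.head s2 s3)



end Tm
end LC
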